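/- arXiv:1104.3910 — 2 statements merged into one kernel-verified Lean document; each statement's English description precedes it below -/
import Mathlib

section
/- Let p be a prime, N ≥ 2, and set s = ⌈α·(log p)/(log N)⌉ for a real α > 0. If Q denotes the set of n ∈ {1, ..., N} coprime to p with q_p(n) = 0, and T denotes the number of integers w ∈ {1, ..., N^s} whose residue modulo p² is a p-th power in (ℤ/p²ℤ)^*, then (#Q)^s ≤ T · max_{m ≤ N^s} τ_s(m), where τ_s(m) is the number of ordered s-tuples of positive integers with product m. -/
open scoped Classical

/-- Fermat quotient: for gcd(u,p)=1 the unique integer in [0,p-1] congruent to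
(u^(p-1)-1)/p mod p; by convention 0 when p divides u. -/
def fermatQuotient (p : ℕ) (u : ℤ) : ℤ :=
  if (p : ℤ) ∣ u then 0 else ((u ^ (p - 1) - 1) / (p : ℤ)) % (p : ℤ)

/-- τ_s(m): number of ordered s-tuples of positive integers with product m. -/
noncomputable def tau (s m : ℕ) : ℕ :=
  Nat.card {f : Fin s → ℕ // (∀ i, 0 < f i) ∧ ∏ i, f i = m}

set_option maxHeartbeats 1600000 in
theorem card_Q_pow_le (p N : ℕ) (hp : p.Prime) (hN : 2 ≤ N) (α : ℝ) (hα : 0 < α)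
    (s : ℕ) (hs : s = ⌈α * Real.log p / Real.log N⌉₊) :
    (((Finset.Icc 1 N).filter
        (fun n : ℕ => Nat.Coprime n p ∧ fermatQuotient p (n : ℤ) = 0)).card) ^ s ≤
      (((Finset.Icc 1 (N ^ s)).filter
          (fun w : ℕ => ∃ x : (ZMod (p ^ 2))ˣ, ((x : ZMod (p ^ 2)) ^ p) = (w : ZMod (p ^ 2)))).card) *
        ((Finset.Icc 1 (N ^ s)).sup (fun m => tau s m)) := by
  haveI : Fact p.Prime := ⟨hp⟩
  set Q := (Finset.Icc 1 N).filter
      (fun n : ℕ => Nat.Coprime n p ∧ fermatQuotient p (n : ℤ) = 0) with hQ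
  set Tset := (Finset.Icc 1 (N ^ s)).filter
      (fun w : ℕ => ∃ x : (ZMod (p ^ 2))ˣ, ((x : ZMod (p ^ 2)) ^ p) = (w : ZMod (p ^ 2))) with hT
  set M := (Finset.Icc 1 (N ^ s)).sup (fun m => tau s m) with hM
  -- key pointwise lemma
  have key : ∀ n ∈ Q, ((n : ZMod (p^2)))^(p-1) = 1 := by
    intro n hn
    rw [hQ, Finset.mem_filter] at hn
    obtain ⟨-, hcop, hfq⟩ := hn
    have hpn : ¬ p ∣ n := (Nat.Prime.coprime_iff_not_dvd hp).mp hcop.symm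
    have hpd : ¬ (p:ℤ) ∣ (n:ℤ) := by exact_mod_cast hpn
    have hp1 : (p:ℤ) ∣ (n:ℤ)^(p-1) - 1 := by
      have hz : ((n:ℕ) : ZMod p) ≠ 0 := by
        rw [Ne, ZMod.natCast_eq_zero_iff]; exact hpn
      have h2 : ((n:ℕ) : ZMod p)^(p-1) = 1 := ZMod.pow_card_sub_one_eq_one hz
      have := (ZMod.intCast_zmod_eq_zero_iff_dvd ((n:ℤ)^(p-1) - 1) p).mp ?_
      · exact this
      · push_cast
        rw [h2, sub_self]
    rw [fermatQuotient, if_neg hpd] at hfq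
    have hq : (p:ℤ) ∣ ((n:ℤ)^(p-1) - 1) / p := Int.dvd_of_emod_eq_zero hfq
    have hsq : ((p:ℤ))^2 ∣ (n:ℤ)^(p-1) - 1 := by
      obtain ⟨c, hc⟩ := hq
      have := Int.ediv_mul_cancel hp1
      refine ⟨c, ?_⟩
      rw [← this, hc]; ring
    have : (((n:ℤ)^(p-1) - 1 : ℤ) : ZMod (p^2)) = 0 := by
      rw [ZMod.intCast_zmod_eq_zero_iff_dvd]
      exact_mod_cast hsq
    push_cast at this
    linear_combination this
  set D := Fintype.piFinset (fun _ : Fin s => Q) with hD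
  have hcard : D.card = Q.card ^ s := by
    simp [hD, Fintype.card_piFinset]
  have hmemD : ∀ g ∈ D, ∀ i, g i ∈ Q := by
    intro g hg i
    rw [hD, Fintype.mem_piFinset] at hg
    exact hg i
  have hQbound : ∀ n ∈ Q, 1 ≤ n ∧ n ≤ N := by
    intro n hn
    rw [hQ, Finset.mem_filter, Finset.mem_Icc] at hn
    exact hn.1
  -- image is contained in Tset
  have himg : D.image (fun g => ∏ i, g i) ⊆ Tset := by
    intro a ha
    rw [Finset.mem_image] at ha
    obtain ⟨g, hg, rfl⟩ := ha
    have hgQ := hmemD g hg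
    refine Finset.mem_filter.mpr ⟨Finset.mem_Icc.mpr ⟨?_, ?_⟩, ?_⟩
    · exact Finset.one_le_prod' (fun i _ => (hQbound _ (hgQ i)).1)
    · calc ∏ i, g i ≤ ∏ _i : Fin s, N :=
            Finset.prod_le_prod' (fun i _ => (hQbound _ (hgQ i)).2)
        _ = N ^ s := by simp
    · have hcop : Nat.Coprime (∏ i, g i) (p^2) := by
        apply Nat.Coprime.pow_right
        apply Nat.Coprime.prod_left
        intro i _
        have := Finset.mem_filter.mp (hgQ i)
        exact this.2.1
      refine ⟨ZMod.unitOfCoprime _ hcop, ?_⟩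
      rw [ZMod.coe_unitOfCoprime]
      have hw : ((∏ i, g i : ℕ) : ZMod (p^2))^(p-1) = 1 := by
        push_cast
        rw [← Finset.prod_pow]
        rw [Finset.prod_eq_one]
        intro i _
        exact key _ (hgQ i)
      have hpp : p - 1 + 1 = p := Nat.succ_pred_eq_of_pos hp.pos
      calc ((∏ i, g i : ℕ) : ZMod (p^2))^p
          = ((∏ i, g i : ℕ) : ZMod (p^2))^(p-1) * ((∏ i, g i : ℕ) : ZMod (p^2)) := by
            rw [← pow_succ, hpp]
        _ = ((∏ i, g i : ℕ) : ZMod (p^2)) := by rw [hw, one_mul]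
  -- fibers bounded by M
  have hfib : ∀ a ∈ D.image (fun g => ∏ i, g i),
      (D.filter (fun g => ∏ i, g i = a)).card ≤ M := by
    intro a ha
    have haT := himg ha
    have haIcc : a ∈ Finset.Icc 1 (N ^ s) := (Finset.mem_filter.mp haT).1
    have ha1 : 1 ≤ a := (Finset.mem_Icc.mp haIcc).1
    have htau : (D.filter (fun g => ∏ i, g i = a)).card ≤ tau s a := by
      haveI : Finite {f : Fin s → ℕ // (∀ i, 0 < f i) ∧ ∏ i, f i = a} := by
        apply Finite.of_injective
          (fun f : {f : Fin s → ℕ // (∀ i, 0 < f i) ∧ ∏ i, f i = a} =>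
            (fun i => (⟨f.1 i, by
              have hd : f.1 i ∣ a := by
                have h := Finset.dvd_prod_of_mem f.1 (Finset.mem_univ i)
                rw [f.2.2] at h; exact h
              exact Nat.lt_succ_of_le (Nat.le_of_dvd ha1 hd)⟩ : Fin (a+1)) : Fin s → Fin (a+1)))
        intro f g hfg
        ext i
        exact congrArg Fin.val (congrFun hfg i)
      have hinj : Function.Injective
          (fun g : ↥(D.filter (fun g => ∏ i, g i = a)) =>
            (⟨g.1, fun i => (hQbound _ (hmemD g.1 (Finset.mem_filter.mp g.2).1 i)).1,
              (Finset.mem_filter.mp g.2).2⟩ :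
              {f : Fin s → ℕ // (∀ i, 0 < f i) ∧ ∏ i, f i = a})) := by
        intro x y hxy
        simp only [Subtype.mk.injEq] at hxy
        exact Subtype.ext hxy
      have := Nat.card_le_card_of_injective _ hinj
      rw [Nat.card_eq_finsetCard] at this
      rw [tau]
      exact this
    exact htau.trans (Finset.le_sup (f := fun m => tau s m) haIcc)
  have hfinal : Q.card ^ s ≤ Tset.card * M := calc
    Q.card ^ s = D.card := hcard.symm
    _ ≤ M * (D.image (fun g => ∏ i, g i)).card :=
        Finset.card_le_mul_card_image _ M hfib
    _ ≤ M * Tset.card := Nat.mul_le_mul_left M (Finset.card_le_card himg)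
    _ = Tset.card * M := Nat.mul_comm _ _
  refine le_trans hfinal (le_of_eq ?_)
  congr 1
  · exact congrArg Finset.card (@Finset.filter_congr_decidable ℕ (Finset.Icc 1 (N ^ s)) _ _ (fun a => Classical.propDecidable _))
end

section
/- Let p be a prime and s a positive integer. If R denotes the set of primes ℓ ≤ N with ℓ ≠ p and q_p(ℓ) = 0, and T denotes the number of integers w ∈ {1, ..., N^s} whose residue modulo p² is a p-th power in (ℤ/p²ℤ)^*, then (#R)^s ≤ s! · T. -/
open scoped Classical

lemma exists_perm_of_ofFn_perm {n : ℕ} {f g : Fin n → ℕ}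
    (h : (List.ofFn f).Perm (List.ofFn g)) : ∃ σ : Equiv.Perm (Fin n), f = g ∘ σ := by
  refine ⟨(Tuple.sort f)⁻¹.trans (Tuple.sort g), ?_⟩
  have heq : f ∘ Tuple.sort f = g ∘ Tuple.sort g := by
    apply List.ofFn_injective
    exact List.Perm.eq_of_sortedLE
      (Tuple.monotone_sort f).sortedLE_ofFn (Tuple.monotone_sort g).sortedLE_ofFn
      (((Tuple.sort f).ofFn_comp_perm f).trans (h.trans ((Tuple.sort g).ofFn_comp_perm g).symm))
  funext x
  have := congrFun heq ((Tuple.sort f)⁻¹ x)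
  simpa using this

lemma pow_sub_one_eq_one_of_fq {p : ℕ} (hp : p.Prime) {l : ℕ} (hl : l.Prime) (hne : l ≠ p)
    (hq : fermatQuotient p (l : ℤ) = 0) : (l : ZMod (p ^ 2)) ^ (p - 1) = 1 := by
  haveI := Fact.mk hp
  have hnd : ¬ p ∣ l := by
    intro hd
    exact hne ((Nat.prime_dvd_prime_iff_eq hp hl).mp hd).symm
  have hndz : ¬ (p : ℤ) ∣ (l : ℤ) := by exact_mod_cast fun h => hnd (Int.ofNat_dvd.mp h)
  rw [fermatQuotient, if_neg hndz] at hq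
  -- Fermat's little theorem: p ∣ l^(p-1) - 1
  have hlz : (l : ZMod p) ≠ 0 := by
    rw [Ne, ZMod.natCast_eq_zero_iff]; exact hnd
  have hdvd1 : (p : ℤ) ∣ (l : ℤ) ^ (p - 1) - 1 := by
    have h1 : ((l : ZMod p)) ^ (p - 1) = 1 := ZMod.pow_card_sub_one_eq_one hlz
    have h2 : ((((l : ℤ) ^ (p - 1) - 1 : ℤ) : ℤ) : ZMod p) = 0 := by push_cast; rw [h1]; ring
    exact (ZMod.intCast_zmod_eq_zero_iff_dvd _ _).mp h2
  have hdvd2 : (p : ℤ) ∣ ((l : ℤ) ^ (p - 1) - 1) / (p : ℤ) := Int.dvd_of_emod_eq_zero hq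
  have hdvdsq : ((p : ℤ) ^ 2) ∣ (l : ℤ) ^ (p - 1) - 1 := by
    obtain ⟨q, hqq⟩ := hdvd2
    have := Int.ediv_mul_cancel hdvd1
    rw [hqq] at this
    exact ⟨q, by rw [← this]; ring⟩
  have : ((((l : ℤ) ^ (p - 1) - 1 : ℤ)) : ZMod (p ^ 2)) = 0 := by
    rw [ZMod.intCast_zmod_eq_zero_iff_dvd]
    exact_mod_cast hdvdsq
  have h2 : ((l : ZMod (p ^ 2))) ^ (p - 1) - 1 = 0 := by push_cast at this; exact_mod_cast this
  linear_combination h2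

theorem card_R_pow_le (p N : ℕ) (hp : p.Prime) (s : ℕ) (hs : 0 < s) :
    (((Finset.Icc 1 N).filter
        (fun l : ℕ => l.Prime ∧ l ≠ p ∧ fermatQuotient p (l : ℤ) = 0)).card) ^ s ≤
      s.factorial *
        (((Finset.Icc 1 (N ^ s)).filter
            (fun w : ℕ => ∃ x : (ZMod (p ^ 2))ˣ, ((x : ZMod (p ^ 2)) ^ p) = (w : ZMod (p ^ 2)))).card) := by
  classical
  set R : Finset ℕ := (Finset.Icc 1 N).filter
      (fun l : ℕ => l.Prime ∧ l ≠ p ∧ fermatQuotient p (l : ℤ) = 0) with hR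
  set T : Finset ℕ := (Finset.Icc 1 (N ^ s)).filter
      (fun w : ℕ => ∃ x : (ZMod (p ^ 2))ˣ, ((x : ZMod (p ^ 2)) ^ p) = (w : ZMod (p ^ 2))) with hT
  have hcard : (Fintype.piFinset (fun _ : Fin s => R)).card = R.card ^ s := by
    rw [Fintype.card_piFinset]
    simp
  rw [← hcard]
  apply Finset.card_le_mul_card_image_of_maps_to (f := fun v : Fin s → ℕ => ∏ i, v i)
  · -- maps to T
    intro v hv
    have hmem : ∀ i, v i ∈ R := fun i => Fintype.mem_piFinset.mp hv i
    have hRprop : ∀ i, v i ∈ Finset.Icc 1 N ∧ (v i).Prime ∧ v i ≠ p ∧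
        fermatQuotient p ((v i : ℤ)) = 0 := by
      intro i
      have := hmem i
      rw [hR, Finset.mem_filter] at this
      exact ⟨this.1, this.2⟩
    rw [hT, Finset.mem_filter]
    refine ⟨?_, ?_⟩
    · rw [Finset.mem_Icc]
      constructor
      · exact Finset.one_le_prod' (fun i _ => (Finset.mem_Icc.mp (hRprop i).1).1)
      · calc ∏ i, v i ≤ ∏ _i : Fin s, N :=
              Finset.prod_le_prod' (fun i _ => (Finset.mem_Icc.mp (hRprop i).1).2)
          _ = N ^ s := by simp [Finset.prod_const]
    · -- p-th power residue
      have hone : ((∏ i, v i : ℕ) : ZMod (p ^ 2)) ^ (p - 1) = 1 := by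
        push_cast
        rw [← Finset.prod_pow]
        exact Finset.prod_eq_one (fun i _ =>
          pow_sub_one_eq_one_of_fq hp (hRprop i).2.1 (hRprop i).2.2.1 (hRprop i).2.2.2)
      have hcop : Nat.Coprime (∏ i, v i) (p ^ 2) := by
        have : ∀ i ∈ (Finset.univ : Finset (Fin s)), Nat.Coprime (v i) p := by
          intro i _
          exact (Nat.coprime_primes (hRprop i).2.1 hp).mpr (hRprop i).2.2.1
        exact (Nat.coprime_prod_left_iff.mpr this).pow_right 2
      refine ⟨ZMod.unitOfCoprime _ hcop, ?_⟩
      rw [ZMod.coe_unitOfCoprime]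
      have hp1 : p = (p - 1) + 1 := (Nat.succ_pred_eq_of_pos hp.pos).symm
      have hps : ((∏ i, v i : ℕ) : ZMod (p ^ 2)) ^ p
          = ((∏ i, v i : ℕ) : ZMod (p ^ 2)) ^ (p - 1) * ((∏ i, v i : ℕ) : ZMod (p ^ 2)) := by
        rw [← pow_succ, ← hp1]
      rw [hps, hone, one_mul]
  · -- fiber bound
    intro w _
    set F := (Fintype.piFinset (fun _ : Fin s => R)).filter
        (fun v : Fin s → ℕ => ∏ i, v i = w) with hF
    rcases F.eq_empty_or_nonempty with he | ⟨v₀, hv₀⟩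
    · simp [he]
    · have hprime : ∀ v ∈ F, ∀ i, (v i).Prime := by
        intro v hv i
        rw [hF, Finset.mem_filter] at hv
        have := Fintype.mem_piFinset.mp hv.1 i
        rw [hR, Finset.mem_filter] at this
        exact this.2.1
      have hsub : F ⊆ Finset.image (fun σ : Equiv.Perm (Fin s) => v₀ ∘ σ) Finset.univ := by
        intro v hv
        have hprod : ∏ i, v i = ∏ i, v₀ i := by
          rw [hF, Finset.mem_filter] at hv hv₀
          rw [hv.2, hv₀.2]
        have hperm : (List.ofFn v).Perm (List.ofFn v₀) := by
          have h1 : (List.ofFn v).prod = ∏ i, v i := Fin.prod_ofFn v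
          have h2 : (List.ofFn v₀).prod = ∏ i, v₀ i := Fin.prod_ofFn v₀
          have hv' := Nat.primeFactorsList_unique (l := List.ofFn v) (n := ∏ i, v i) h1
            (by
              intro q hq
              obtain ⟨i, rfl⟩ := List.mem_ofFn.mp hq
              exact hprime v hv i)
          have hv₀' := Nat.primeFactorsList_unique (l := List.ofFn v₀) (n := ∏ i, v i)
            (by rw [h2, hprod])
            (by
              intro q hq
              obtain ⟨i, rfl⟩ := List.mem_ofFn.mp hq
              exact hprime v₀ hv₀ i)
          exact hv'.trans hv₀'.symm
        obtain ⟨σ, hσ⟩ := exists_perm_of_ofFn_perm hperm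
        exact Finset.mem_image.mpr ⟨σ, Finset.mem_univ σ, hσ.symm⟩
      calc F.card ≤ (Finset.image (fun σ : Equiv.Perm (Fin s) => v₀ ∘ σ) Finset.univ).card := Finset.card_le_card hsub
        _ ≤ (Finset.univ : Finset (Equiv.Perm (Fin s))).card := Finset.card_image_le
        _ = s.factorial := by
            rw [Finset.card_univ, Fintype.card_perm, Fintype.card_fin]
end
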